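/- Let n ≥ 2 be an integer, R > 0, and C ∈ ℝ with C ≠ 0. If v : ℝ → ℝ is twice continuously differentiable on (0,R) and satisfies the radial Hamiltonian stationary ODE v''(r)/(1+v'(r)^2) + (n−1)(r·v'(r) − v(r))/(r^2+v(r)^2) = C·(1+v'(r)^2)^{1/2}/(r^2+v(r)^2)^{(n−1)/2} for all r ∈ (0,R), then it is not the case that v(r) → 0 as r → 0⁺. -/

import Mathlib

open Real Filter Set

/-- (Corollary `initial` of Chen–Warren.)
If `v` is twice continuously differentiable on `(0,R)` and solves the radial
Hamiltonian stationary ODE with `C ≠ 0`, then `v(r)` does not tend to `0` as `r → 0⁺`. -/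
theorem radial_solution_nonzero_C_no_zero_limit
    (n : ℕ) (hn : 2 ≤ n) (R C : ℝ) (hR : 0 < R) (hC : C ≠ 0)
    (v : ℝ → ℝ) (hv : ContDiffOn ℝ 2 v (Set.Ioo 0 R))
    (hode : ∀ r ∈ Set.Ioo (0 : ℝ) R,
      deriv (deriv v) r / (1 + (deriv v r) ^ 2)
        + ((n : ℝ) - 1) * (r * deriv v r - v r) / (r ^ 2 + (v r) ^ 2)
        = C * Real.sqrt (1 + (deriv v r) ^ 2)
            / Real.sqrt ((r ^ 2 + (v r) ^ 2) ^ (n - 1))) :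
    ¬ Filter.Tendsto v (nhdsWithin 0 (Set.Ioi 0)) (nhds 0) := by
  intro hlim
  have hopen : IsOpen (Set.Ioo (0:ℝ) R) := isOpen_Ioo
  -- first and second derivatives exist on (0,R)
  have hv1 : ∀ r ∈ Set.Ioo (0:ℝ) R, HasDerivAt v (deriv v r) r := by
    intro r hr
    exact ((hv.differentiableOn (by norm_num)).differentiableAt
      (hopen.mem_nhds hr)).hasDerivAt
  have hdv : ContDiffOn ℝ 1 (deriv v) (Set.Ioo 0 R) :=
    hv.deriv_of_isOpen hopen (by norm_num)
  have hv2 : ∀ r ∈ Set.Ioo (0:ℝ) R, HasDerivAt (deriv v) (deriv (deriv v) r) r := by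
    intro r hr
    exact ((hdv.differentiableOn (by norm_num)).differentiableAt
      (hopen.mem_nhds hr)).hasDerivAt
  -- positivity of f r = r^2 + v r^2 for r > 0
  have hfpos : ∀ r : ℝ, 0 < r → 0 < r^2 + v r^2 := by
    intro r hr
    have : 0 < r^2 := pow_pos hr 2
    nlinarith [sq_nonneg (v r)]
  -- the Lagrangian angle
  set θ : ℝ → ℝ := fun x => Real.arctan (deriv v x) + ((n:ℝ)-1) * Real.arctan (v x / x)
    with hθdef
  have hθ : ∀ r ∈ Set.Ioo (0:ℝ) R,
      HasDerivAt θ (C * Real.sqrt (1 + (deriv v r)^2)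
        / Real.sqrt ((r^2 + v r^2)^(n-1))) r := by
    intro r hr
    have hr0 : (0:ℝ) < r := hr.1
    have h1 : HasDerivAt (fun x => Real.arctan (deriv v x))
        (1/(1 + (deriv v r)^2) * deriv (deriv v) r) r :=
      (Real.hasDerivAt_arctan (deriv v r)).comp r (hv2 r hr)
    have hdivd : HasDerivAt (fun x => v x / x)
        ((deriv v r * r - v r * 1) / r^2) r :=
      (hv1 r hr).div (hasDerivAt_id r) hr0.ne'
    have h2 : HasDerivAt (fun x => Real.arctan (v x / x))
        (1/(1 + (v r / r)^2) * ((deriv v r * r - v r * 1) / r^2)) r :=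
      hdivd.arctan
    have h3 : HasDerivAt θ
        (1/(1 + (deriv v r)^2) * deriv (deriv v) r
          + ((n:ℝ)-1) * (1/(1 + (v r / r)^2) * ((deriv v r * r - v r * 1) / r^2))) r :=
      h1.add (h2.const_mul _)
    have heq : 1/(1 + (deriv v r)^2) * deriv (deriv v) r
          + ((n:ℝ)-1) * (1/(1 + (v r / r)^2) * ((deriv v r * r - v r * 1) / r^2))
        = deriv (deriv v) r / (1 + (deriv v r) ^ 2)
          + ((n : ℝ) - 1) * (r * deriv v r - v r) / (r ^ 2 + (v r) ^ 2) := by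
      have hA : (1:ℝ) + (deriv v r)^2 ≠ 0 := by positivity
      have hf : r^2 + v r^2 ≠ 0 := (hfpos r hr0).ne'
      have hB : (1:ℝ) + (v r / r)^2 ≠ 0 := by positivity
      field_simp
    rw [heq, hode r hr] at h3
    exact h3
  -- log of f
  have hL : ∀ r ∈ Set.Ioo (0:ℝ) R,
      HasDerivAt (fun x => Real.log (x^2 + v x^2))
        ((2*r + 2 * v r * deriv v r) / (r^2 + v r^2)) r := by
    intro r hr
    have hsq : HasDerivAt (fun x : ℝ => x^2) (2*r) r := by
      simpa using (hasDerivAt_id r).fun_pow 2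
    have hvsq : HasDerivAt (fun x => v x ^ 2) (2 * v r * deriv v r) r := by
      have := (hv1 r hr).fun_pow 2
      simpa [mul_comm, mul_assoc] using this
    have hadd : HasDerivAt (fun x => x^2 + v x ^2) (2*r + 2 * v r * deriv v r) r :=
      hsq.add hvsq
    exact hadd.log (hfpos r hr.1).ne'
  -- f tends to 0 along 0⁺
  have hf0 : Filter.Tendsto (fun r => r^2 + v r^2) (nhdsWithin 0 (Set.Ioi 0)) (nhds 0) := by
    have h1 : Filter.Tendsto (fun r : ℝ => r^2) (nhdsWithin 0 (Set.Ioi 0)) (nhds 0) := by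
      have := ((continuous_pow 2).tendsto (0:ℝ)).mono_left
        (nhdsWithin_le_nhds (s := Set.Ioi (0:ℝ)))
      simpa using this
    have h2 := hlim.pow 2
    simp only [ne_eq, OfNat.ofNat_ne_zero, not_false_eq_true, zero_pow] at h2
    simpa using h1.add h2
  -- choose δ₀ so that f < 1 on (0,δ₀)
  have hlt1 : (fun r => r^2 + v r^2) ⁻¹' Set.Iio 1 ∈ nhdsWithin 0 (Set.Ioi 0) :=
    hf0 (Iio_mem_nhds one_pos)
  obtain ⟨δ₀, hδ₀pos, hδ₀⟩ := (nhdsGT_basis (0:ℝ)).mem_iff.mp hlt1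
  set δ : ℝ := min δ₀ R with hδdef
  have hδpos : 0 < δ := lt_min hδ₀pos hR
  have hsubR : Set.Ioo 0 δ ⊆ Set.Ioo 0 R := Set.Ioo_subset_Ioo le_rfl (min_le_right _ _)
  have hsub1 : ∀ r ∈ Set.Ioo (0:ℝ) δ, r^2 + v r^2 < 1 := by
    intro r hrr
    exact hδ₀ ⟨hrr.1, lt_of_lt_of_le hrr.2 (min_le_left _ _)⟩
  -- φ = (2/C) θ − log f is monotone on (0,δ)
  set φ : ℝ → ℝ := fun x => (2/C) * θ x - Real.log (x^2 + v x^2) with hφdef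
  have hφderiv : ∀ r ∈ Set.Ioo (0:ℝ) δ, ∃ d, HasDerivAt φ d r ∧ 0 ≤ d := by
    intro r hrr
    have hr := hsubR hrr
    have hθ' := (hθ r hr).const_mul (2/C)
    have hL' := hL r hr
    refine ⟨_, hθ'.sub hL', ?_⟩
    set A := deriv v r with hAdef
    set f := r^2 + v r^2 with hfdef
    have hfpos' : 0 < f := hfpos r hr.1
    have hf1 : f < 1 := hsub1 r hrr
    have hS : (0:ℝ) < Real.sqrt (1 + A^2) := Real.sqrt_pos.mpr (by positivity)
    have hT : (0:ℝ) < Real.sqrt (f^(n-1)) := Real.sqrt_pos.mpr (by positivity)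
    have hTle : Real.sqrt (f^(n-1)) ≤ Real.sqrt f := by
      apply Real.sqrt_le_sqrt
      calc f^(n-1) ≤ f^1 := pow_le_pow_of_le_one hfpos'.le hf1.le (by omega)
        _ = f := pow_one f
    have hsf : (0:ℝ) < Real.sqrt f := Real.sqrt_pos.mpr hfpos'
    have hsf2 : Real.sqrt f ^ 2 = f := Real.sq_sqrt hfpos'.le
    have hS2 : Real.sqrt (1 + A^2) ^ 2 = 1 + A^2 := Real.sq_sqrt (by positivity)
    -- Cauchy–Schwarz: |2r + 2 v v'| ≤ 2 √f √(1+A²)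
    have hCS : |2*r + 2 * v r * A| ≤ 2 * Real.sqrt f * Real.sqrt (1 + A^2) := by
      have hsq' : (2*r + 2 * v r * A)^2 ≤ (2 * Real.sqrt f * Real.sqrt (1 + A^2))^2 := by
        have h4 : (2 * Real.sqrt f * Real.sqrt (1 + A^2))^2 = 4 * f * (1 + A^2) := by
          rw [mul_pow, mul_pow, hsf2, hS2]; ring
        rw [h4, hfdef]
        nlinarith [sq_nonneg (r * A - v r)]
      have := abs_le_of_sq_le_sq' hsq' (by positivity)
      exact abs_le.mpr this
    -- |L'| ≤ 2√(1+A²)/√f ≤ 2√(1+A²)/√(f^(n-1))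
    have hbound : |(2*r + 2 * v r * A) / f| ≤
        2 * Real.sqrt (1 + A^2) / Real.sqrt (f^(n-1)) := by
      rw [abs_div, abs_of_pos hfpos']
      have step1 : |2*r + 2 * v r * A| / f ≤ 2 * Real.sqrt (1 + A^2) / Real.sqrt f := by
        rw [div_le_div_iff₀ hfpos' hsf]
        calc |2*r + 2 * v r * A| * Real.sqrt f
            ≤ (2 * Real.sqrt f * Real.sqrt (1 + A^2)) * Real.sqrt f :=
              mul_le_mul_of_nonneg_right hCS hsf.le
          _ = 2 * Real.sqrt (1 + A^2) * (Real.sqrt f * Real.sqrt f) := by ring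
          _ = 2 * Real.sqrt (1 + A^2) * f := by
              rw [Real.mul_self_sqrt hfpos'.le]
      exact step1.trans (div_le_div_of_nonneg_left (by positivity) hT hTle)
    have hgval : 2/C * (C * Real.sqrt (1 + A^2) / Real.sqrt (f^(n-1)))
        = 2 * Real.sqrt (1 + A^2) / Real.sqrt (f^(n-1)) := by
      field_simp
    rw [hgval]
    linarith [(abs_le.mp hbound).2]
  have hφmono : MonotoneOn φ (Set.Ioo 0 δ) := by
    apply monotoneOn_of_deriv_nonneg (convex_Ioo 0 δ)
    · intro x hx
      obtain ⟨d, hd, _⟩ := hφderiv x hx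
      exact hd.differentiableAt.continuousAt.continuousWithinAt
    · intro x hx
      rw [interior_Ioo] at hx
      obtain ⟨d, hd, _⟩ := hφderiv x hx
      exact hd.differentiableAt.differentiableWithinAt
    · intro x hx
      rw [interior_Ioo] at hx
      obtain ⟨d, hd, hd0⟩ := hφderiv x hx
      rw [hd.deriv]; exact hd0
  -- θ is bounded
  have hθbd : ∀ x : ℝ, |θ x| ≤ Real.pi/2 + ((n:ℝ)-1) * (Real.pi/2) := by
    intro x
    have h1 : |Real.arctan (deriv v x)| ≤ Real.pi/2 :=
      le_of_lt (abs_lt.mpr ⟨Real.neg_pi_div_two_lt_arctan _, Real.arctan_lt_pi_div_two _⟩)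
    have h2 : |Real.arctan (v x / x)| ≤ Real.pi/2 :=
      le_of_lt (abs_lt.mpr ⟨Real.neg_pi_div_two_lt_arctan _, Real.arctan_lt_pi_div_two _⟩)
    have hn1 : (0:ℝ) ≤ (n:ℝ) - 1 := by
      have : (2:ℝ) ≤ (n:ℝ) := by exact_mod_cast hn
      linarith
    calc |θ x| ≤ |Real.arctan (deriv v x)| + |((n:ℝ)-1) * Real.arctan (v x / x)| :=
          abs_add_le _ _
      _ = |Real.arctan (deriv v x)| + ((n:ℝ)-1) * |Real.arctan (v x / x)| := by
          rw [abs_mul, abs_of_nonneg hn1]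
      _ ≤ Real.pi/2 + ((n:ℝ)-1) * (Real.pi/2) := by
          have := mul_le_mul_of_nonneg_left h2 hn1
          linarith
  set M : ℝ := |2/C| * (Real.pi/2 + ((n:ℝ)-1) * (Real.pi/2)) with hMdef
  have hGbd : ∀ x : ℝ, |(2/C) * θ x| ≤ M := by
    intro x
    rw [abs_mul]
    exact mul_le_mul_of_nonneg_left (hθbd x) (abs_nonneg _)
  -- fix b = δ/2; monotonicity gives a lower bound on log f on (0, δ/2)
  set b : ℝ := δ/2 with hbdef
  have hbmem : b ∈ Set.Ioo (0:ℝ) δ := ⟨by positivity, by rw [hbdef]; linarith⟩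
  have hlow : ∀ r ∈ Set.Ioo (0:ℝ) b, -M - φ b ≤ Real.log (r^2 + v r^2) := by
    intro r hrr
    have hrδ : r ∈ Set.Ioo (0:ℝ) δ := ⟨hrr.1, hrr.2.trans_le (by rw [hbdef]; linarith)⟩
    have hmono := hφmono hrδ hbmem (le_of_lt hrr.2)
    have hg := (abs_le.mp (hGbd r)).1
    have hφr : φ r = 2/C * θ r - Real.log (r^2 + v r^2) := rfl
    rw [hφr] at hmono
    clear_value φ M b δ θ
    linarith
  -- but log f → -∞
  have hfne : Filter.Tendsto (fun r => r^2 + v r^2) (nhdsWithin 0 (Set.Ioi 0))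
      (nhdsWithin 0 {0}ᶜ) := by
    apply tendsto_nhdsWithin_of_tendsto_nhds_of_eventually_within _ hf0
    filter_upwards [self_mem_nhdsWithin] with r hr
    exact (hfpos r hr).ne'
  have hlogtend : Filter.Tendsto (fun r => Real.log (r^2 + v r^2))
      (nhdsWithin 0 (Set.Ioi 0)) Filter.atBot :=
    Real.tendsto_log_nhdsNE_zero.comp hfne
  have hev1 : ∀ᶠ r in nhdsWithin (0:ℝ) (Set.Ioi 0),
      Real.log (r^2 + v r^2) < -M - φ b :=
    hlogtend.eventually (eventually_lt_atBot _)
  have hev2 : ∀ᶠ r in nhdsWithin (0:ℝ) (Set.Ioi 0), r ∈ Set.Ioo (0:ℝ) b :=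
    eventually_of_mem (Ioo_mem_nhdsGT_of_mem ⟨le_refl 0, hbmem.1⟩) (fun x hx => hx)
  obtain ⟨r, hr1, hr2⟩ := (hev1.and hev2).exists
  linarith [hlow r hr2]
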